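/- Fix an integer r ≥ 2 and λ > 1 with λ bounded by a constant A. For λ = 1 + ε, there exist constants 0 < c₂, c₃ < 1 (depending only on r and A) such that for all 0 ≤ τ ≤ c₂ε and ρ = ρ_{r,λ}: g(τ) ≥ c₃ετ, g(ρ - τ) ≥ c₃ετ, and g(ρ + τ) ≤ -c₃ετ, where g(τ) = 1 - τ - exp(-(λ/(r-1))(1 - (1-τ)^{r-1})). -/

import Mathlib

open Real Set

noncomputable def gFun (l : ℝ) (n : ℕ) (σ : ℝ) : ℝ :=
  1 - σ - Real.exp (-(l / n) * (1 - (1 - σ) ^ n))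

noncomputable def gFun' (l : ℝ) (n : ℕ) (σ : ℝ) : ℝ :=
  -1 + l * (1 - σ) ^ (n - 1) * Real.exp (-(l / n) * (1 - (1 - σ) ^ n))

noncomputable def gFun'' (l : ℝ) (n : ℕ) (σ : ℝ) : ℝ :=
  -((l * (↑(n - 1)) * (1 - σ) ^ (n - 1 - 1) + l ^ 2 * (1 - σ) ^ (n - 1 + (n - 1))) *
    Real.exp (-(l / n) * (1 - (1 - σ) ^ n)))

lemma gFun_hasDeriv (l : ℝ) (n : ℕ) (hn : 1 ≤ n) (σ : ℝ) :
    HasDerivAt (gFun l n) (gFun' l n σ) σ := by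
  have hn' : (n : ℝ) ≠ 0 := Nat.cast_ne_zero.mpr (by omega)
  have h1 : HasDerivAt (fun x : ℝ => 1 - x) (-1) σ := (hasDerivAt_id σ).const_sub 1
  have h2 : HasDerivAt (fun x : ℝ => (1 - x) ^ n) _ σ := h1.pow n
  have h3 := h2.const_sub 1
  have h4 := h3.const_mul (-(l / n))
  have h5 := h4.exp
  have h6 : HasDerivAt (fun x : ℝ => (1 - x) - Real.exp (-(l / n) * (1 - (1 - x) ^ n))) _ σ := h1.sub h5
  refine h6.congr_deriv ?_
  unfold gFun'
  field_simp
  ring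

lemma gFun'_hasDeriv (l : ℝ) (n : ℕ) (hn : 1 ≤ n) (σ : ℝ) :
    HasDerivAt (gFun' l n) (gFun'' l n σ) σ := by
  have hn' : (n : ℝ) ≠ 0 := Nat.cast_ne_zero.mpr (by omega)
  have h1 : HasDerivAt (fun x : ℝ => 1 - x) (-1) σ := (hasDerivAt_id σ).const_sub 1
  have hp : HasDerivAt (fun x : ℝ => (1 - x) ^ (n - 1)) _ σ := h1.pow (n - 1)
  have h5 := (((show HasDerivAt (fun x : ℝ => (1 - x) ^ n) _ σ from h1.pow n).const_sub 1).const_mul (-(l / n))).exp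
  have hm : HasDerivAt (fun x : ℝ => (1 - x) ^ (n - 1) * Real.exp (-(l / n) * (1 - (1 - x) ^ n))) _ σ := hp.mul h5
  have H := (hm.const_mul l).const_add (-1)
  have heq : (fun σ : ℝ => -1 + l * ((1 - σ) ^ (n - 1) *
      Real.exp (-(l / n) * (1 - (1 - σ) ^ n)))) = gFun' l n := by
    funext x; unfold gFun'; ring
  rw [heq] at H
  refine H.congr_deriv ?_
  unfold gFun''
  field_simp
  ring

lemma gFun''_bound (l A : ℝ) (n : ℕ) (hl : 0 ≤ l) (hlA : l ≤ A) (σ : ℝ)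
    (hσ : σ ∈ Set.Icc (0:ℝ) 1) : |gFun'' l n σ| ≤ A * n + A ^ 2 := by
  obtain ⟨h0, h1⟩ := hσ
  have hb0 : (0:ℝ) ≤ 1 - σ := by linarith
  have hb1 : (1:ℝ) - σ ≤ 1 := by linarith
  have hA0 : (0:ℝ) ≤ A := le_trans hl hlA
  have hp1 : (1 - σ) ^ (n - 1 - 1) ≤ 1 := pow_le_one₀ hb0 hb1
  have hp2 : (1 - σ) ^ (n - 1 + (n - 1)) ≤ 1 := pow_le_one₀ hb0 hb1
  have hp1' : 0 ≤ (1 - σ) ^ (n - 1 - 1) := pow_nonneg hb0 _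
  have hp2' : 0 ≤ (1 - σ) ^ (n - 1 + (n - 1)) := pow_nonneg hb0 _
  have hpn : (1 - σ) ^ n ≤ 1 := pow_le_one₀ hb0 hb1
  have hE : -(l / n) * (1 - (1 - σ) ^ n) ≤ 0 := by
    have hd : 0 ≤ l / n := div_nonneg hl (Nat.cast_nonneg n)
    nlinarith
  have he1 : Real.exp (-(l / n) * (1 - (1 - σ) ^ n)) ≤ 1 := Real.exp_le_one_iff.mpr hE
  have he0 : 0 < Real.exp (-(l / n) * (1 - (1 - σ) ^ n)) := Real.exp_pos _
  have hcast : ((n - 1 : ℕ) : ℝ) ≤ (n : ℝ) := by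
    exact_mod_cast Nat.cast_le.mpr (Nat.sub_le n 1)
  have hn0 : (0:ℝ) ≤ ((n - 1 : ℕ) : ℝ) := Nat.cast_nonneg _
  have hX : 0 ≤ l * (↑(n - 1)) * (1 - σ) ^ (n - 1 - 1) + l ^ 2 * (1 - σ) ^ (n - 1 + (n - 1)) := by
    positivity
  unfold gFun''
  rw [abs_neg, abs_of_nonneg (by positivity)]
  nlinarith [mul_le_mul_of_nonneg_left he1 hX,
    mul_le_mul_of_nonneg_left hp1 (mul_nonneg hl hn0),
    mul_le_mul_of_nonneg_left hp2 (sq_nonneg l),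
    mul_le_mul hlA hcast hn0 hA0, mul_le_mul hlA hlA hl hA0]

lemma gFun'_lip (l A : ℝ) (n : ℕ) (hn : 1 ≤ n) (hl : 0 ≤ l) (hlA : l ≤ A)
    (x y : ℝ) (hx : x ∈ Set.Icc (0:ℝ) 1) (hy : y ∈ Set.Icc (0:ℝ) 1) :
    |gFun' l n y - gFun' l n x| ≤ (A * n + A ^ 2) * |y - x| := by
  have := Convex.norm_image_sub_le_of_norm_hasDerivWithin_le
    (f := gFun' l n) (f' := gFun'' l n) (s := Set.Icc (0:ℝ) 1) (C := A * n + A ^ 2)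
    (fun z hz => (gFun'_hasDeriv l n hn z).hasDerivWithinAt)
    (fun z hz => by rw [Real.norm_eq_abs]; exact gFun''_bound l A n hl hlA z hz)
    (convex_Icc 0 1) hx hy
  simpa [Real.norm_eq_abs] using this

lemma gFun_mvt (l : ℝ) (n : ℕ) (hn : 1 ≤ n) (a b : ℝ) (hab : a ≤ b) :
    ∃ ξ ∈ Set.Icc a b, gFun l n b - gFun l n a = gFun' l n ξ * (b - a) := by
  rcases eq_or_lt_of_le hab with h | h
  · exact ⟨a, ⟨le_refl a, hab⟩, by rw [← h]; ring⟩
  · obtain ⟨ξ, hξ, hslope⟩ := exists_hasDerivAt_eq_slope (gFun l n) (gFun' l n) h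
      (fun x _ => (gFun_hasDeriv l n hn x).continuousAt.continuousWithinAt)
      (fun x _ => gFun_hasDeriv l n hn x)
    refine ⟨ξ, ⟨hξ.1.le, hξ.2.le⟩, ?_⟩
    rw [hslope, div_mul_cancel₀ _ (sub_ne_zero.mpr h.ne')]

lemma quad_le_exp (x : ℝ) (hx : 0 ≤ x) : 1 + x + x ^ 2 / 4 ≤ Real.exp x := by
  have h2 : Real.exp (x / 2) * Real.exp (x / 2) = Real.exp x := by
    rw [← Real.exp_add]; ring_nf
  have h3 : 1 + x / 2 ≤ Real.exp (x / 2) := by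
    have := Real.add_one_le_exp (x / 2); linarith
  nlinarith [Real.exp_pos (x / 2)]

lemma delta_lb (A ε ρl : ℝ) (hA : 1 < A) (hε : 0 < ε) (hlA : 1 + ε ≤ A)
    (h0 : 0 < ρl) (h1 : ρl < 1)
    (hroot : 1 - ρl = Real.exp (-((1 + ε) * ρl))) :
    ε ≤ (1 + ε) * ρl ∧ ε / (A + 4) ≤ (1 + ε) * ρl - ε := by
  set x := (1 + ε) * ρl with hxdef
  have hx : 0 < x := by positivity
  have hxA : x ≤ A := by nlinarith
  have hw : (1 - ρl) * Real.exp x = 1 := by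
    rw [hroot, ← Real.exp_add]; simp
  have hq := quad_le_exp x hx.le
  have hkey : (1 - ρl) * (1 + x + x ^ 2 / 4) ≤ 1 := by
    calc (1 - ρl) * (1 + x + x ^ 2 / 4) ≤ (1 - ρl) * Real.exp x := by
          apply mul_le_mul_of_nonneg_left hq (by linarith)
      _ = 1 := hw
  have hl : (0:ℝ) < 1 + ε := by linarith
  have hmain : (1 + ε) * (1 + x / 4) ≤ 1 + x + x ^ 2 / 4 := by
    have h2 : x + x ^ 2 / 4 ≤ ρl * (1 + x + x ^ 2 / 4) := by nlinarith
    have h3 := mul_le_mul_of_nonneg_left h2 hl.le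
    rw [hxdef] at h3 ⊢
    nlinarith
  constructor
  · nlinarith
  · rw [div_le_iff₀ (by linarith)]
    nlinarith

lemma consts (A nn rr M c₃ c₂ : ℝ) (hA : 1 < A) (h1n : 1 ≤ nn) (hnr : nn ≤ rr)
    (hM : M = A * nn + A ^ 2) (hc3 : c₃ = 1 / (2 * (A + 4)))
    (hc2 : c₂ = c₃ * Real.exp (-A) / (M * A * rr)) :
    0 < c₂ ∧ c₂ < 1 ∧ 0 < c₃ ∧ c₃ ≤ 1 / 10 ∧ M * c₂ ≤ c₃ * Real.exp (-A) ∧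
      c₂ * (A * nn) ≤ 1 ∧ c₂ * A ≤ Real.exp (-A) ∧ 1 ≤ M := by
  have hr1 : (1:ℝ) ≤ rr := le_trans h1n hnr
  have hM1 : (1:ℝ) ≤ M := by nlinarith
  have hM0 : (0:ℝ) < M := by linarith
  have he0 : (0:ℝ) < Real.exp (-A) := Real.exp_pos _
  have he1 : Real.exp (-A) ≤ 1 := Real.exp_le_one_iff.mpr (by linarith)
  have hc3pos : 0 < c₃ := by rw [hc3]; positivity
  have hc3small : c₃ ≤ 1 / 10 := by
    rw [hc3, div_le_div_iff₀ (by linarith) (by norm_num)]; linarith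
  have hc2pos : 0 < c₂ := by rw [hc2]; positivity
  have hAr : (1:ℝ) ≤ A * rr := by nlinarith
  have hce : c₃ * Real.exp (-A) ≤ 1 := by
    nlinarith [mul_le_mul_of_nonneg_left he1 hc3pos.le]
  have hc2M : M * c₂ ≤ c₃ * Real.exp (-A) := by
    rw [hc2, mul_div_assoc', div_le_iff₀ (by positivity)]
    nlinarith [mul_le_mul_of_nonneg_left hAr (mul_pos (mul_pos hc3pos he0) hM0).le]
  have hc2An : c₂ * (A * nn) ≤ 1 := by
    rw [hc2, div_mul_eq_mul_div, div_le_one (by positivity)]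
    have h1 : c₃ * Real.exp (-A) * (A * nn) ≤ 1 * (A * nn) :=
      mul_le_mul_of_nonneg_right hce (by positivity)
    have h2 : A * nn ≤ M := by nlinarith [sq_nonneg A]
    have h3 : M * 1 ≤ M * (A * rr) := mul_le_mul_of_nonneg_left hAr hM0.le
    nlinarith
  have hc2A : c₂ * A ≤ Real.exp (-A) := by
    rw [hc2, div_mul_eq_mul_div, div_le_iff₀ (by positivity)]
    have hMr : (1:ℝ) ≤ M * rr := by nlinarith
    have hA0 : (0:ℝ) < A := by linarith
    have h1 : Real.exp (-A) * A * 1 ≤ Real.exp (-A) * A * (M * rr) :=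
      mul_le_mul_of_nonneg_left hMr (by positivity)
    have h2 : c₃ * (Real.exp (-A) * A) ≤ (1/10) * (Real.exp (-A) * A) :=
      mul_le_mul_of_nonneg_right hc3small (by positivity)
    nlinarith
  have hc2lt1 : c₂ < 1 := by
    have hstep : c₂ * 1 ≤ c₂ * M := mul_le_mul_of_nonneg_left hM1 hc2pos.le
    have hce10 : c₃ * Real.exp (-A) ≤ c₃ * 1 := mul_le_mul_of_nonneg_left he1 hc3pos.le
    have hcomm : c₂ * M = M * c₂ := mul_comm _ _
    linarith
  exact ⟨hc2pos, hc2lt1, hc3pos, hc3small, hc2M, hc2An, hc2A, hM1⟩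


set_option maxHeartbeats 1600000


/-- Fix r ≥ 2 and A > 1. There exist constants 0 < c₂, c₃ < 1 (depending only on r
and A) such that for all λ = 1 + ε ∈ (1, A] and all 0 ≤ τ ≤ c₂ε, with ρ = ρ_{r,λ}:
g(τ) ≥ c₃ετ, g(ρ - τ) ≥ c₃ετ, and g(ρ + τ) ≤ -c₃ετ. -/
theorem g_linear_bounds (r : ℕ) (hr : 2 ≤ r) (A : ℝ) (hA : 1 < A) :
    ∃ c₂ c₃ : ℝ, 0 < c₂ ∧ c₂ < 1 ∧ 0 < c₃ ∧ c₃ < 1 ∧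
      ∀ ε ρl ρ : ℝ, 0 < ε → 1 + ε ≤ A →
        0 < ρl → ρl < 1 → 1 - ρl = Real.exp (-((1 + ε) * ρl)) →
        1 - ρ = (1 - ρl) ^ ((1 : ℝ) / (r - 1)) →
        ∀ τ : ℝ, 0 ≤ τ → τ ≤ c₂ * ε →
          (fun σ : ℝ => 1 - σ -
              Real.exp (-((1 + ε) / (r - 1)) * (1 - (1 - σ) ^ (r - 1)))) τ ≥ c₃ * ε * τ ∧
          (fun σ : ℝ => 1 - σ -
              Real.exp (-((1 + ε) / (r - 1)) * (1 - (1 - σ) ^ (r - 1)))) (ρ - τ) ≥ c₃ * ε * τ ∧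
          (fun σ : ℝ => 1 - σ -
              Real.exp (-((1 + ε) / (r - 1)) * (1 - (1 - σ) ^ (r - 1)))) (ρ + τ) ≤ -(c₃ * ε * τ) := by
  set n := r - 1 with hndef
  have hn : 1 ≤ n := by omega
  have hnR : ((r : ℝ) - 1) = (n : ℝ) := by
    rw [hndef]; push_cast [Nat.cast_sub (by omega : 1 ≤ r)]; ring
  clear_value n
  have h1n : (1:ℝ) ≤ (n:ℝ) := by exact_mod_cast hn
  have hnr' : ((n:ℝ)) ≤ (r:ℝ) := by exact_mod_cast (by omega : n ≤ r)
  have hn0 : ((n:ℝ)) ≠ 0 := by positivity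
  set M : ℝ := A * ↑n + A ^ 2 with hMdef
  set c₃ : ℝ := 1 / (2 * (A + 4)) with hc3def
  set c₂ : ℝ := c₃ * Real.exp (-A) / (M * A * ↑r) with hc2def
  obtain ⟨hc2pos, hc2lt1, hc3pos, hc3small, hc2M, hc2An, hc2A, hM1⟩ :=
    consts A ↑n ↑r M c₃ c₂ hA h1n hnr' hMdef hc3def hc2def
  clear_value M c₃ c₂
  have hM0 : (0:ℝ) < M := by linarith
  have he1 : Real.exp (-A) ≤ 1 := Real.exp_le_one_iff.mpr (by linarith)
  refine ⟨c₂, c₃, hc2pos, hc2lt1, hc3pos, by linarith, ?_⟩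
  intro ε ρl ρ hε hεA hρl0 hρl1 hroot hρdef τ hτ0 hτc
  have hl0 : (0:ℝ) ≤ 1 + ε := by linarith
  obtain ⟨hρlx, hδ⟩ := delta_lb A ε ρl hA hε hεA hρl0 hρl1 hroot
  have hδ2 : 2 * (c₃ * ε) ≤ (1 + ε) * ρl - ε := by
    have he : ε / (A + 4) = 2 * (c₃ * ε) := by
      rw [hc3def]; field_simp
    linarith [he ▸ hδ]
  -- s facts
  have hw0 : (0:ℝ) < 1 - ρl := by linarith
  set s : ℝ := (1 - ρl) ^ ((1:ℝ)/(n:ℝ)) with hsdef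
  clear_value s
  have hs : 1 - ρ = s := by rw [hρdef, hnR, hsdef]
  have hsn' : s ^ n = 1 - ρl := by
    rw [hsdef, ← Real.rpow_natCast ((1 - ρl) ^ ((1:ℝ)/(n:ℝ))) n, ← Real.rpow_mul hw0.le,
      one_div_mul_cancel hn0, Real.rpow_one]
  have hs0 : 0 < s := by rw [hsdef]; exact Real.rpow_pos_of_pos hw0 _
  have hs1 : s ≤ 1 := by
    rw [hsdef]; exact Real.rpow_le_one hw0.le (by linarith) (by positivity)
  have hρeq : ρ = 1 - s := by linarith
  have hsw : 1 - ρl ≤ s := by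
    calc 1 - ρl = s ^ n := hsn'.symm
      _ ≤ s ^ 1 := pow_le_pow_of_le_one hs0.le hs1 hn
      _ = s := pow_one s
  have hes : Real.exp (-A) ≤ s := by
    have hxA : (1 + ε) * ρl ≤ A := by
      have t1 : (1 + ε) * ρl ≤ A * ρl := mul_le_mul_of_nonneg_right hεA hρl0.le
      have t2 : A * ρl ≤ A * 1 := mul_le_mul_of_nonneg_left hρl1.le (by linarith)
      linarith
    have h2 : Real.exp (-A) ≤ Real.exp (-((1 + ε) * ρl)) :=
      Real.exp_le_exp.mpr (by linarith)
    calc Real.exp (-A) ≤ 1 - ρl := by rw [hroot]; exact h2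
      _ ≤ s := hsw
  -- ρ bounds
  have hρ1 : ρ ≤ 1 := by rw [hρeq]; linarith
  have hgeom : ρl ≤ ↑n * ρ := by
    have hkey : (∑ i ∈ Finset.range n, s ^ i) * (s - 1) = -ρl := by
      rw [geom_sum_mul, hsn']; ring
    have hsum_le : (∑ i ∈ Finset.range n, s ^ i) ≤ (n:ℝ) := by
      calc (∑ i ∈ Finset.range n, s ^ i) ≤ ∑ _i ∈ Finset.range n, (1:ℝ) :=
            Finset.sum_le_sum (fun i _ => pow_le_one₀ hs0.le hs1)
        _ = (n:ℝ) := by simp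
    have hρ0' : 0 ≤ 1 - s := by linarith
    have h2 : ρl = (∑ i ∈ Finset.range n, s ^ i) * (1 - s) := by linarith [hkey]
    have h3 : (∑ i ∈ Finset.range n, s ^ i) * (1 - s) ≤ (n:ℝ) * (1 - s) :=
      mul_le_mul_of_nonneg_right hsum_le hρ0'
    rw [hρeq]; linarith
  have hτρ : τ ≤ ρ := by
    have hρ0' : 0 ≤ ρ := by rw [hρeq]; linarith
    have hρlb : ε ≤ A * ((n:ℝ) * ρ) := by
      have t1 : (1 + ε) * ρl ≤ A * ρl := mul_le_mul_of_nonneg_right hεA hρl0.le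
      have t2 : A * ρl ≤ A * ((n:ℝ) * ρ) := mul_le_mul_of_nonneg_left hgeom (by linarith)
      linarith
    have t3 := mul_le_mul_of_nonneg_left hρlb hc2pos.le
    have t4 := mul_le_mul_of_nonneg_right hc2An hρ0'
    nlinarith [t3, t4]
  have hρ0 : 0 ≤ ρ := le_trans hτ0 hτρ
  have hτe : τ ≤ Real.exp (-A) := by
    have t1 : c₂ * ε ≤ c₂ * A := mul_le_mul_of_nonneg_left (by linarith) hc2pos.le
    linarith
  have hτ1 : τ ≤ 1 := le_trans hτe he1
  have hρτ1 : ρ + τ ≤ 1 := by rw [hρeq]; linarith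
  -- values
  have hG0 : gFun (1 + ε) n 0 = 0 := by unfold gFun; norm_num
  have hG'0 : gFun' (1 + ε) n 0 = ε := by unfold gFun'; norm_num
  have hexps : Real.exp (-((1 + ε) / (n:ℝ)) * ρl) = s := by
    rw [show (-((1 + ε) / (n:ℝ)) * ρl) = (-((1 + ε) * ρl)) * ((1:ℝ)/(n:ℝ)) by ring,
      Real.exp_mul, ← hroot, hsdef]
  have hGρ : gFun (1 + ε) n ρ = 0 := by
    unfold gFun
    rw [show (1:ℝ) - ρ = s from hs, hsn',
      show -((1 + ε) / (n:ℝ)) * (1 - (1 - ρl)) = -((1 + ε) / (n:ℝ)) * ρl by ring, hexps]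
    ring
  have hG'ρ : gFun' (1 + ε) n ρ = -((1 + ε) * ρl - ε) := by
    unfold gFun'
    rw [show (1:ℝ) - ρ = s from hs, hsn',
      show -((1 + ε) / (n:ℝ)) * (1 - (1 - ρl)) = -((1 + ε) / (n:ℝ)) * ρl by ring, hexps,
      mul_assoc, ← pow_succ, show n - 1 + 1 = n from by omega, hsn']
    ring
  have hMτ : M * τ ≤ c₃ * ε := by
    have h1 : M * τ ≤ M * (c₂ * ε) := mul_le_mul_of_nonneg_left hτc hM0.le
    have h3 : (M * c₂) * ε ≤ (c₃ * Real.exp (-A)) * ε := mul_le_mul_of_nonneg_right hc2M hε.le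
    have h4 : (c₃ * Real.exp (-A)) * ε ≤ (c₃ * 1) * ε :=
      mul_le_mul_of_nonneg_right (mul_le_mul_of_nonneg_left he1 hc3pos.le) hε.le
    linarith [h1, h3, h4]
  have hc3ε : c₃ * ε ≤ (1/10) * ε := mul_le_mul_of_nonneg_right hc3small hε.le
  -- rewrite goal
  have hfun : ∀ σ : ℝ, 1 - σ - Real.exp (-((1 + ε) / ((r:ℝ) - 1)) * (1 - (1 - σ) ^ n))
      = gFun (1 + ε) n σ := fun σ => by unfold gFun; rw [hnR]
  simp only [hfun]
  refine ⟨?_, ?_, ?_⟩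
  -- Part 1
  · obtain ⟨ξ, hξ, hmv⟩ := gFun_mvt (1 + ε) n hn 0 τ hτ0
    have hξ1 : ξ ≤ 1 := le_trans hξ.2 hτ1
    have hlip := gFun'_lip (1 + ε) A n hn hl0 hεA 0 ξ
      ⟨le_refl 0, by norm_num⟩ ⟨hξ.1, hξ1⟩
    rw [← hMdef] at hlip
    have habs : |ξ - 0| ≤ τ := by rw [sub_zero, abs_of_nonneg hξ.1]; exact hξ.2
    have hlip2 := le_trans hlip (mul_le_mul_of_nonneg_left habs hM0.le)
    have hG'ξ : ε - M * τ ≤ gFun' (1 + ε) n ξ := by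
      have := (abs_le.mp hlip2).1
      rw [hG'0] at this; linarith
    rw [hG0, sub_zero, sub_zero] at hmv
    have hge : c₃ * ε ≤ gFun' (1 + ε) n ξ := by linarith
    have := mul_le_mul_of_nonneg_right hge hτ0
    linarith [hmv]
  -- Part 2
  · obtain ⟨ξ, hξ, hmv⟩ := gFun_mvt (1 + ε) n hn (ρ - τ) ρ (by linarith)
    have hlip := gFun'_lip (1 + ε) A n hn hl0 hεA ρ ξ
      ⟨hρ0, hρ1⟩ ⟨by linarith [hξ.1], by linarith [hξ.2]⟩
    rw [← hMdef] at hlip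
    have habs : |ξ - ρ| ≤ τ := abs_le.mpr ⟨by linarith [hξ.1], by linarith [hξ.2]⟩
    have hlip2 := le_trans hlip (mul_le_mul_of_nonneg_left habs hM0.le)
    have hG'ξ : gFun' (1 + ε) n ξ ≤ -(c₃ * ε) := by
      have := (abs_le.mp hlip2).2
      rw [hG'ρ] at this; linarith
    rw [hGρ, show ρ - (ρ - τ) = τ by ring] at hmv
    have := mul_le_mul_of_nonneg_right hG'ξ hτ0
    linarith [hmv]
  -- Part 3
  · obtain ⟨ξ, hξ, hmv⟩ := gFun_mvt (1 + ε) n hn ρ (ρ + τ) (by linarith)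
    have hlip := gFun'_lip (1 + ε) A n hn hl0 hεA ρ ξ
      ⟨hρ0, hρ1⟩ ⟨by linarith [hξ.1], by linarith [hξ.2]⟩
    rw [← hMdef] at hlip
    have habs : |ξ - ρ| ≤ τ := abs_le.mpr ⟨by linarith [hξ.1], by linarith [hξ.2]⟩
    have hlip2 := le_trans hlip (mul_le_mul_of_nonneg_left habs hM0.le)
    have hG'ξ : gFun' (1 + ε) n ξ ≤ -(c₃ * ε) := by
      have := (abs_le.mp hlip2).2
      rw [hG'ρ] at this; linarith
    rw [hGρ, show ρ + τ - ρ = τ by ring] at hmv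
    have := mul_le_mul_of_nonneg_right hG'ξ hτ0
    linarith [hmv]
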